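/- Let Q be a longest path in a graph G with extreme q, let r be a neighbor of q lying on Q with r not adjacent to q along Q, and let q' be the vertex adjacent to r on Q that is closer to q along Q. Then the path Q' obtained from Q by adding the edge qr and removing the edge rq' is a longest path in G with extreme q', and V(Q') = V(Q). -/

import Mathlib

/-- Pósa's rotation: Let `Q` be a longest path in `G` with extreme `q`,
let `r` be a neighbor of `q` lying on `Q` with `r` not adjacent to `q` along `Q` (i.e.
`s(q,r)` is not an edge of `Q`), and let `q'` be the vertex adjacent to `r` on `Q` that is
closer to `q` along `Q` (i.e. `s(q',r)` is an edge of `Q` and `q'` lies on the initial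
segment of `Q` up to `r`). Then the path `Q'` obtained from `Q` by adding the edge `qr`
and removing the edge `rq'` is a longest path in `G` with extreme `q'`, and
`V(Q') = V(Q)`. -/
theorem stmt_15 {V : Type*} [DecidableEq V] {G : SimpleGraph V}
    {q z : V} (Q : G.Walk q z) (hQ : Q.IsPath)
    (hQmax : ∀ (a b : V) (W : G.Walk a b), W.IsPath → W.length ≤ Q.length)
    {r : V} (hadj : G.Adj q r) (hr : r ∈ Q.support)
    (hnotQ : s(q, r) ∉ Q.edges)
    {q' : V} (hq'edge : s(q', r) ∈ Q.edges)
    (hq'closer : q' ∈ (Q.takeUntil r hr).support) :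
    ∃ Q' : G.Walk q' z, Q'.IsPath ∧
      (∀ (a b : V) (W : G.Walk a b), W.IsPath → W.length ≤ Q'.length) ∧
      (∀ x, x ∈ Q'.support ↔ x ∈ Q.support) ∧
      (∀ e, e ∈ Q'.edges ↔ (e ∈ Q.edges ∧ e ≠ s(q', r)) ∨ e = s(q, r)) := by
  classical
  set P := Q.takeUntil r hr with hPdef
  set D := Q.dropUntil r hr with hDdef
  have hspec : P.append D = Q := Q.take_spec hr
  have hqr : q ≠ r := hadj.ne
  have hPpath : P.IsPath := hQ.takeUntil hr
  obtain ⟨x, hx, P', hPc⟩ := SimpleGraph.Walk.exists_eq_cons_of_ne hqr P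
  obtain ⟨y, W, hy, hWc⟩ := SimpleGraph.Walk.exists_cons_eq_concat hx P'
  have hPW : P = W.concat hy := by rw [hPc, hWc]
  have hrW : r ∉ W.support := by
    have h := hPpath.support_nodup
    rw [hPW, SimpleGraph.Walk.support_concat] at h
    exact fun hm => (List.disjoint_of_nodup_append h) hm (by simp)
  have hq'r : q' ≠ r := (Q.adj_of_mem_edges hq'edge).ne
  have hQsup : Q.support = (W.support ++ [r]) ++ D.support.tail := by
    rw [← hspec, SimpleGraph.Walk.support_append, hPW, SimpleGraph.Walk.support_concat]
  have hQedges : Q.edges = (W.edges ++ [s(y, r)]) ++ D.edges := by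
    rw [← hspec, SimpleGraph.Walk.edges_append, hPW, SimpleGraph.Walk.edges_concat,
      List.concat_eq_append]
  have hyq' : y = q' := by
    have he := hq'edge
    rw [hQedges] at he
    rcases List.mem_append.mp he with h1 | h2
    · rcases List.mem_append.mp h1 with h3 | h4
      · exact absurd (W.snd_mem_support_of_mem_edges h3) hrW
      · have heq : s(q', r) = s(y, r) := by simpa using h4
        rcases Sym2.eq_iff.mp heq with ⟨h, _⟩ | ⟨h, _⟩
        · exact h.symm
        · exact absurd h hq'r
    · have hq'D : q' ∈ D.support := D.fst_mem_support_of_mem_edges h2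
      have hq'Dt : q' ∈ D.support.tail := by
        rw [D.support_eq_cons] at hq'D
        rcases List.mem_cons.mp hq'D with h | h
        · exact absurd h hq'r
        · exact h
      have hnd := hQ.support_nodup
      rw [hQsup] at hnd
      have hdisj := List.disjoint_of_nodup_append hnd
      have hq'P : q' ∈ W.support ++ [r] := by
        rw [hPW, SimpleGraph.Walk.support_concat] at hq'closer
        simpa using hq'closer
      exact absurd hq'Dt (hdisj hq'P)
  subst hyq'
  set Q' : G.Walk y z := W.reverse.append (SimpleGraph.Walk.cons hadj D) with hQ'def
  have hsup' : Q'.support = W.support.reverse ++ D.support := by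
    rw [hQ'def, SimpleGraph.Walk.support_append, SimpleGraph.Walk.support_reverse]
    simp
  have hperm : Q'.support.Perm Q.support := by
    rw [hsup', hQsup, D.support_eq_cons, List.append_assoc]
    exact (W.support.reverse_perm).append_right _
  have hpath' : Q'.IsPath :=
    (SimpleGraph.Walk.isPath_def _).mpr (hperm.nodup_iff.mpr hQ.support_nodup)
  have hlen : Q'.length = Q.length := by
    rw [hQ'def, ← hspec, SimpleGraph.Walk.length_append, SimpleGraph.Walk.length_append,
      SimpleGraph.Walk.length_reverse, hPW, SimpleGraph.Walk.length_concat,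
      SimpleGraph.Walk.length_cons]
    omega
  have hedges' : Q'.edges = W.edges.reverse ++ (s(q, r) :: D.edges) := by
    rw [hQ'def, SimpleGraph.Walk.edges_append, SimpleGraph.Walk.edges_reverse,
      SimpleGraph.Walk.edges_cons]
  have hnW : s(y, r) ∉ W.edges ∧ s(y, r) ∉ D.edges := by
    have h := hQ.edges_nodup
    rw [hQedges] at h
    constructor
    · intro hm
      exact (List.disjoint_of_nodup_append (List.nodup_append.mp h).1) hm (by simp)
    · intro hm
      exact (List.disjoint_of_nodup_append h) (by simp) hm
  refine ⟨Q', hpath', ?_, ?_, ?_⟩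
  · intro a b W' hW'
    rw [hlen]; exact hQmax a b W' hW'
  · intro x; exact hperm.mem_iff
  · intro e
    rw [hedges', hQedges]
    simp only [List.mem_append, List.mem_reverse, List.mem_cons, List.mem_singleton,
      List.not_mem_nil, or_false]
    constructor
    · rintro (hW | rfl | hD)
      · refine Or.inl ⟨Or.inl (Or.inl hW), ?_⟩; rintro rfl; exact hnW.1 hW
      · exact Or.inr rfl
      · refine Or.inl ⟨Or.inr hD, ?_⟩; rintro rfl; exact hnW.2 hD
    · rintro (⟨(hW | rfl) | hD, hne⟩ | rfl)
      · exact Or.inl hW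
      · exact absurd rfl hne
      · exact Or.inr (Or.inr hD)
      · exact Or.inr (Or.inl rfl)
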